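/- arXiv:1507.05031 — 8 statements merged into one kernel-verified Lean document; each statement's English description precedes it below -/
import Mathlib

section
/- The estimator E_4 = (1/(N^{\underline{4}} N³))(N^{\underline{2}} Σ_4 − 4Σ_2²) + (2/(N^{\underline{4}} N^{\underline{2}} N²))Σ_2², with Σ_4 = N·S_4 − 4S_3S_1 + 3S_2², is an unbiased estimator of Var(E_2): E[E_4] = (1/N³)(J_4 − 4J_3J_1 + 3J_2² − 4(J_2 − J_1²)²) + (2/(N^{\underline{2}} N²))(J_2 − J_1²)². -/
open MeasureTheory ProbabilityTheory Finset

section AuxAlg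
variable {N : ℕ}

private noncomputable def psum (x : Fin N → ℝ) (p : ℕ) : ℝ := ∑ j, x j ^ p

private noncomputable def Dtwo (x : Fin N → ℝ) (a b : ℕ) : ℝ :=
  ∑ j, ∑ k ∈ Finset.univ.erase j, x j ^ a * x k ^ b

private noncomputable def Dthree (x : Fin N → ℝ) (a b c : ℕ) : ℝ :=
  ∑ j, ∑ k ∈ Finset.univ.erase j, ∑ l ∈ (Finset.univ.erase j).erase k,
    x j ^ a * x k ^ b * x l ^ c

private noncomputable def Dfour (x : Fin N → ℝ) : ℝ :=
  ∑ j, ∑ k ∈ Finset.univ.erase j, ∑ l ∈ (Finset.univ.erase j).erase k,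
    ∑ m ∈ ((Finset.univ.erase j).erase k).erase l, x j * x k * x l * x m

private lemma psum_mul (x : Fin N → ℝ) (a b : ℕ) :
    psum x a * psum x b = psum x (a + b) + Dtwo x a b := by
  unfold psum Dtwo
  rw [Finset.sum_mul, ← Finset.sum_add_distrib]
  refine Finset.sum_congr rfl fun j _ => ?_
  rw [← Finset.add_sum_erase _ (fun k => x k ^ b) (Finset.mem_univ j), mul_add,
    Finset.mul_sum, ← pow_add]

private lemma psum_mul_Dtwo (x : Fin N → ℝ) (a b c : ℕ) :
    psum x c * Dtwo x a b = Dtwo x (a + c) b + Dtwo x a (b + c) + Dthree x a b c := by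
  unfold psum Dtwo Dthree
  rw [Finset.mul_sum, ← Finset.sum_add_distrib, ← Finset.sum_add_distrib]
  refine Finset.sum_congr rfl fun j _ => ?_
  rw [Finset.mul_sum, ← Finset.sum_add_distrib, ← Finset.sum_add_distrib]
  refine Finset.sum_congr rfl fun k hk => ?_
  have hS : ∑ l ∈ (Finset.univ.erase j).erase k, x j ^ a * x k ^ b * x l ^ c
      = (∑ l ∈ (Finset.univ.erase j).erase k, x l ^ c) * (x j ^ a * x k ^ b) := by
    rw [Finset.sum_mul]; exact Finset.sum_congr rfl fun l _ => by ring
  rw [hS, ← Finset.add_sum_erase _ (fun m => x m ^ c) (Finset.mem_univ j),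
    ← Finset.add_sum_erase _ (fun m => x m ^ c) hk]
  ring

private lemma psum_mul_Dthree (x : Fin N → ℝ) :
    psum x 1 * Dthree x 1 1 1
      = Dthree x 2 1 1 + Dthree x 1 2 1 + Dthree x 1 1 2 + Dfour x := by
  unfold psum Dthree Dfour
  rw [Finset.mul_sum, ← Finset.sum_add_distrib, ← Finset.sum_add_distrib,
    ← Finset.sum_add_distrib]
  refine Finset.sum_congr rfl fun j _ => ?_
  rw [Finset.mul_sum, ← Finset.sum_add_distrib, ← Finset.sum_add_distrib,
    ← Finset.sum_add_distrib]
  refine Finset.sum_congr rfl fun k hk => ?_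
  rw [Finset.mul_sum, ← Finset.sum_add_distrib, ← Finset.sum_add_distrib,
    ← Finset.sum_add_distrib]
  refine Finset.sum_congr rfl fun l hl => ?_
  have hS : ∑ m ∈ ((Finset.univ.erase j).erase k).erase l, x j * x k * x l * x m
      = (∑ m ∈ ((Finset.univ.erase j).erase k).erase l, x m ^ 1)
          * (x j ^ 1 * x k ^ 1 * x l ^ 1) := by
    rw [Finset.sum_mul]; exact Finset.sum_congr rfl fun m _ => by ring
  rw [hS, ← Finset.add_sum_erase _ (fun m => x m ^ 1) (Finset.mem_univ j),
    ← Finset.add_sum_erase _ (fun m => x m ^ 1) hk,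
    ← Finset.add_sum_erase _ (fun m => x m ^ 1) hl]
  ring

end AuxAlg


private lemma iIndep_congr {Ω ι : Type*} [MeasurableSpace Ω] {μ : Measure Ω}
    [Countable ι] {β : ι → Type*} {m : ∀ i, MeasurableSpace (β i)} {f g : ∀ i, Ω → β i}
    (hf : iIndepFun f μ) (h : ∀ i, f i =ᵐ[μ] g i) : iIndepFun g μ := by
  rw [iIndepFun_iff_measure_inter_preimage_eq_mul] at hf ⊢
  intro S sets hsets
  have hball : ∀ᵐ ω ∂μ, ∀ i, f i ω = g i ω := ae_all_iff.2 h
  have hae : ∀ i, (f i ⁻¹' sets i : Set Ω) =ᵐ[μ] (g i ⁻¹' sets i : Set Ω) := by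
    intro i
    filter_upwards [h i] with ω hω
    change (f i ω ∈ sets i) = (g i ω ∈ sets i)
    rw [hω]
  have hInter : (⋂ i ∈ S, g i ⁻¹' sets i : Set Ω) =ᵐ[μ] (⋂ i ∈ S, f i ⁻¹' sets i) := by
    filter_upwards [hball] with ω hω
    change (ω ∈ ⋂ i ∈ S, g i ⁻¹' sets i) = (ω ∈ ⋂ i ∈ S, f i ⁻¹' sets i)
    simp only [Set.mem_iInter, Set.mem_preimage, hω]
  rw [measure_congr hInter, hf S hsets]
  exact Finset.prod_congr rfl fun i _ => (measure_congr (hae i))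


section AuxProb
variable {Ω : Type*} [MeasureSpace Ω] [IsProbabilityMeasure (ℙ : Measure Ω)]
  {N : ℕ} {v : Fin N → Ω → ℝ} {J : ℕ → ℝ}

private lemma integrable_pow_of_memL4 {g : Ω → ℝ} (hmeas : Measurable g)
    (h4 : MemLp g 4 ℙ) {q : ℕ} (hq : q ≤ 4) :
    Integrable (fun ω => g ω ^ q) ℙ := by
  have h := h4.integrable_norm_rpow (by norm_num) (by norm_num)
  have h' : Integrable (fun ω => ‖g ω‖ ^ (4 : ℕ)) ℙ := by
    have e : (fun ω => ‖g ω‖ ^ (ENNReal.toReal (4 : ENNReal))) = fun ω => ‖g ω‖ ^ (4:ℕ) := by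
      funext ω
      rw [show ENNReal.toReal (4 : ENNReal) = ((4:ℕ):ℝ) by norm_num, Real.rpow_natCast]
    rwa [e] at h
  refine Integrable.mono' (h'.add (integrable_const 1)) ((hmeas.pow_const q).aestronglyMeasurable) ?_
  filter_upwards with ω
  simp only [Pi.add_apply]
  rw [norm_pow]
  rcases le_total (‖g ω‖) 1 with h1 | h1
  · have : ‖g ω‖ ^ q ≤ 1 := pow_le_one₀ (norm_nonneg _) h1
    have h2 : (0:ℝ) ≤ ‖g ω‖ ^ (4:ℕ) := by positivity
    linarith
  · have : ‖g ω‖ ^ q ≤ ‖g ω‖ ^ (4:ℕ) := pow_le_pow_right₀ h1 hq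
    linarith

private lemma eprod
    (hmeas : ∀ i, Measurable (v i))
    (hindep : iIndepFun v ℙ)
    (hint : ∀ i (q : ℕ), q ≤ 4 → Integrable (fun ω => v i ω ^ q) ℙ)
    (hmom : ∀ i (q : ℕ), q ≤ 4 → (∫ ω, v i ω ^ q ∂ℙ) = J q)
    (m : Fin N → ℕ) (hm : ∀ i, m i ≤ 4) (s : Finset (Fin N)) :
    Integrable (fun ω => ∏ i ∈ s, v i ω ^ m i) ℙ ∧
      (∫ ω, ∏ i ∈ s, v i ω ^ m i ∂ℙ) = ∏ i ∈ s, J (m i) := by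
  classical
  induction s using Finset.induction_on with
  | empty =>
    constructor
    · simpa using integrable_const (1:ℝ)
    · simp
  | @insert i s hi ih =>
    set f : Fin N → Ω → ℝ := fun j ω => v j ω ^ m j with hf
    have hfmeas : ∀ j, Measurable (f j) := fun j => (hmeas j).pow_const _
    have hfind : iIndepFun f ℙ :=
      hindep.comp (fun j x => x ^ m j) fun j => measurable_id.pow_const _
    have hIndep : IndepFun (∏ j ∈ s, f j) (f i) ℙ :=
      hfind.indepFun_finsetProd_of_notMem hfmeas hi
    have hprodfn : (∏ j ∈ s, f j) = fun ω => ∏ j ∈ s, v j ω ^ m j := by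
      funext ω; simp [hf]
    have h1 : Integrable (∏ j ∈ s, f j) ℙ := by rw [hprodfn]; exact ih.1
    have h2 : Integrable (f i) ℙ := hint i (m i) (hm i)
    have key : (fun ω => ∏ j ∈ insert i s, v j ω ^ m j)
        = (∏ j ∈ s, f j) * f i := by
      funext ω
      simp only [Pi.mul_apply, hprodfn, Finset.prod_insert hi, hf, Finset.prod_apply]
      ring
    constructor
    · rw [show (fun ω => ∏ j ∈ insert i s, v j ω ^ m j)
          = (∏ j ∈ s, f j) * f i from key]
      exact hIndep.integrable_mul h1 h2
    · rw [show (fun ω => ∏ j ∈ insert i s, v j ω ^ m j)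
          = (∏ j ∈ s, f j) * f i from key,
        hIndep.integral_mul_eq_mul_integral h1.aestronglyMeasurable h2.aestronglyMeasurable, Finset.prod_insert hi]
      have : integral ℙ (∏ j ∈ s, f j) = ∏ i ∈ s, J (m i) := by
        rw [hprodfn]; exact ih.2
      rw [this]
      have : integral ℙ (f i) = J (m i) := hmom i (m i) (hm i)
      rw [this, mul_comm]

end AuxProb

section AuxProb
variable {Ω : Type*} [MeasureSpace Ω] [IsProbabilityMeasure (ℙ : Measure Ω)]
  {N : ℕ} {v : Fin N → Ω → ℝ} {J : ℕ → ℝ}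
  (hmeas : ∀ i, Measurable (v i))
  (hindep : iIndepFun v ℙ)
  (hint : ∀ i (q : ℕ), q ≤ 4 → Integrable (fun ω => v i ω ^ q) ℙ)
  (hmom : ∀ i (q : ℕ), q ≤ 4 → (∫ ω, v i ω ^ q ∂ℙ) = J q)


include hmeas hindep hint hmom

set_option linter.unusedSectionVars false

private lemma epair {j k : Fin N} (hjk : j ≠ k) {a b : ℕ} (ha : a ≤ 4) (hb : b ≤ 4) :
    Integrable (fun ω => v j ω ^ a * v k ω ^ b) ℙ ∧
      (∫ ω, v j ω ^ a * v k ω ^ b ∂ℙ) = J a * J b := by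
  classical
  have h := eprod hmeas hindep hint hmom (fun i => if i = j then a else b)
    (fun i => by split <;> assumption) {j, k}
  simpa [Finset.prod_pair hjk, Ne.symm hjk] using h

private lemma etriple {j k l : Fin N} (hjk : j ≠ k) (hjl : j ≠ l) (hkl : k ≠ l)
    {a b c : ℕ} (ha : a ≤ 4) (hb : b ≤ 4) (hc : c ≤ 4) :
    Integrable (fun ω => v j ω ^ a * v k ω ^ b * v l ω ^ c) ℙ ∧
      (∫ ω, v j ω ^ a * v k ω ^ b * v l ω ^ c ∂ℙ) = J a * J b * J c := by
  classical
  have h := eprod hmeas hindep hint hmom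
    (fun i => if i = j then a else if i = k then b else c)
    (fun i => by split; · assumption
                 split <;> assumption) {j, k, l}
  have hs1 : (j : Fin N) ∉ ({k, l} : Finset (Fin N)) := by simp [hjk, hjl]
  have hs2 : (k : Fin N) ∉ ({l} : Finset (Fin N)) := by simp [hkl]
  have hset : ({j, k, l} : Finset (Fin N)) = insert j (insert k {l}) := rfl
  simp only [hset, Finset.prod_insert hs1, Finset.prod_insert hs2,
    Finset.prod_singleton, if_pos rfl, if_neg (Ne.symm hjk), if_neg (Ne.symm hjl),
    if_neg (Ne.symm hkl)] at h
  simpa [mul_assoc] using h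

private lemma equad {j k l m : Fin N} (hjk : j ≠ k) (hjl : j ≠ l) (hjm : j ≠ m)
    (hkl : k ≠ l) (hkm : k ≠ m) (hlm : l ≠ m) :
    Integrable (fun ω => v j ω * v k ω * v l ω * v m ω) ℙ ∧
      (∫ ω, v j ω * v k ω * v l ω * v m ω ∂ℙ) = J 1 * J 1 * J 1 * J 1 := by
  classical
  have h := eprod hmeas hindep hint hmom (fun _ => 1)
    (fun i => by norm_num) {j, k, l, m}
  have hs1 : (j : Fin N) ∉ ({k, l, m} : Finset (Fin N)) := by simp [hjk, hjl, hjm]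
  have hs2 : (k : Fin N) ∉ ({l, m} : Finset (Fin N)) := by simp [hkl, hkm]
  have hs3 : (l : Fin N) ∉ ({m} : Finset (Fin N)) := by simp [hlm]
  have hset : ({j, k, l, m} : Finset (Fin N)) = insert j (insert k (insert l {m})) := rfl
  simp only [hset, Finset.prod_insert hs1, Finset.prod_insert hs2, Finset.prod_insert hs3,
    Finset.prod_singleton, pow_one] at h
  simpa [mul_assoc] using h

private lemma int_psum {p : ℕ} (hp : p ≤ 4) :
    Integrable (fun ω => psum (fun j => v j ω) p) ℙ ∧
      (∫ ω, psum (fun j => v j ω) p ∂ℙ) = (N : ℝ) * J p := by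
  unfold psum
  constructor
  · exact integrable_finset_sum _ fun j _ => hint j p hp
  · rw [integral_finset_sum _ fun j _ => hint j p hp]
    simp [hmom _ p hp, Finset.card_univ, mul_comm]

private lemma int_Dtwo {a b : ℕ} (ha : a ≤ 4) (hb : b ≤ 4) :
    Integrable (fun ω => Dtwo (fun j => v j ω) a b) ℙ ∧
      (∫ ω, Dtwo (fun j => v j ω) a b ∂ℙ)
        = (N : ℝ) * ((N : ℝ) - 1) * (J a * J b) := by
  unfold Dtwo
  have hterm : ∀ j, ∀ k ∈ Finset.univ.erase j,
      Integrable (fun ω => v j ω ^ a * v k ω ^ b) ℙ := fun j k hk =>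
    (epair hmeas hindep hint hmom (Ne.symm (Finset.mem_erase.1 hk).1) ha hb).1
  constructor
  · exact integrable_finset_sum _ fun j _ =>
      integrable_finset_sum _ fun k hk => hterm j k hk
  · rw [integral_finset_sum _ fun j _ => integrable_finset_sum _ fun k hk => hterm j k hk]
    have key : ∀ j : Fin N, (∫ ω, ∑ k ∈ Finset.univ.erase j, v j ω ^ a * v k ω ^ b ∂ℙ)
        = ((N : ℝ) - 1) * (J a * J b) := by
      intro j
      have hN1 : 1 ≤ N := Nat.pos_of_ne_zero (by rintro rfl; exact j.elim0)
      rw [integral_finset_sum _ fun k hk => hterm j k hk]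
      have heach : ∀ k ∈ Finset.univ.erase j,
          (∫ ω, v j ω ^ a * v k ω ^ b ∂ℙ) = J a * J b :=
        fun k hk => (epair hmeas hindep hint hmom (Ne.symm (Finset.mem_erase.1 hk).1) ha hb).2
      rw [Finset.sum_congr rfl heach, Finset.sum_const,
        Finset.card_erase_of_mem (Finset.mem_univ j), Finset.card_univ, Fintype.card_fin,
        nsmul_eq_mul, Nat.cast_sub hN1, Nat.cast_one]
    rw [Finset.sum_congr rfl fun j _ => key j, Finset.sum_const, Finset.card_univ,
      Fintype.card_fin, nsmul_eq_mul]
    ring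

private lemma int_Dthree (hN : 4 ≤ N) {a b c : ℕ} (ha : a ≤ 4) (hb : b ≤ 4) (hc : c ≤ 4) :
    Integrable (fun ω => Dthree (fun j => v j ω) a b c) ℙ ∧
      (∫ ω, Dthree (fun j => v j ω) a b c ∂ℙ)
        = (N : ℝ) * ((N : ℝ) - 1) * ((N : ℝ) - 2) * (J a * J b * J c) := by
  unfold Dthree
  have hterm : ∀ j k l, k ∈ Finset.univ.erase j → l ∈ (Finset.univ.erase j).erase k →
      Integrable (fun ω => v j ω ^ a * v k ω ^ b * v l ω ^ c) ℙ ∧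
        (∫ ω, v j ω ^ a * v k ω ^ b * v l ω ^ c ∂ℙ) = J a * J b * J c := by
    intro j k l hk hl
    have h1 : k ≠ j := (Finset.mem_erase.1 hk).1
    have h2 : l ≠ k := (Finset.mem_erase.1 hl).1
    have h3 : l ≠ j := (Finset.mem_erase.1 (Finset.mem_of_mem_erase hl)).1
    exact etriple hmeas hindep hint hmom h1.symm h3.symm h2.symm ha hb hc
  constructor
  · exact integrable_finset_sum _ fun j _ => integrable_finset_sum _ fun k hk =>
      integrable_finset_sum _ fun l hl => (hterm j k l hk hl).1
  · rw [integral_finset_sum _ fun j _ => integrable_finset_sum _ fun k hk =>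
      integrable_finset_sum _ fun l hl => (hterm j k l hk hl).1]
    have key : ∀ j : Fin N,
        (∫ ω, ∑ k ∈ Finset.univ.erase j, ∑ l ∈ (Finset.univ.erase j).erase k,
            v j ω ^ a * v k ω ^ b * v l ω ^ c ∂ℙ)
          = ((N : ℝ) - 1) * (((N : ℝ) - 2) * (J a * J b * J c)) := by
      intro j
      rw [integral_finset_sum _ fun k hk =>
        integrable_finset_sum _ fun l hl => (hterm j k l hk hl).1]
      have hkk : ∀ k ∈ Finset.univ.erase j,
          (∫ ω, ∑ l ∈ (Finset.univ.erase j).erase k,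
              v j ω ^ a * v k ω ^ b * v l ω ^ c ∂ℙ)
            = ((N : ℝ) - 2) * (J a * J b * J c) := by
        intro k hk
        rw [integral_finset_sum _ fun l hl => (hterm j k l hk hl).1,
          Finset.sum_congr rfl fun l hl => (hterm j k l hk hl).2, Finset.sum_const,
          Finset.card_erase_of_mem hk, Finset.card_erase_of_mem (Finset.mem_univ j),
          Finset.card_univ, Fintype.card_fin, nsmul_eq_mul,
          show N - 1 - 1 = N - 2 by omega, Nat.cast_sub (by omega), Nat.cast_ofNat]
      rw [Finset.sum_congr rfl hkk, Finset.sum_const,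
        Finset.card_erase_of_mem (Finset.mem_univ j), Finset.card_univ, Fintype.card_fin,
        nsmul_eq_mul, Nat.cast_sub (by omega), Nat.cast_one]
    rw [Finset.sum_congr rfl fun j _ => key j, Finset.sum_const, Finset.card_univ,
      Fintype.card_fin, nsmul_eq_mul]
    ring

private lemma int_Dfour (hN : 4 ≤ N) :
    Integrable (fun ω => Dfour (fun j => v j ω)) ℙ ∧
      (∫ ω, Dfour (fun j => v j ω) ∂ℙ)
        = (N : ℝ) * ((N : ℝ) - 1) * ((N : ℝ) - 2) * ((N : ℝ) - 3)
            * (J 1 * J 1 * J 1 * J 1) := by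
  unfold Dfour
  have hterm : ∀ j k l m, k ∈ Finset.univ.erase j → l ∈ (Finset.univ.erase j).erase k →
      m ∈ ((Finset.univ.erase j).erase k).erase l →
      Integrable (fun ω => v j ω * v k ω * v l ω * v m ω) ℙ ∧
        (∫ ω, v j ω * v k ω * v l ω * v m ω ∂ℙ) = J 1 * J 1 * J 1 * J 1 := by
    intro j k l m hk hl hm
    have h1 : k ≠ j := (Finset.mem_erase.1 hk).1
    have h2 : l ≠ k := (Finset.mem_erase.1 hl).1
    have h3 : l ≠ j := (Finset.mem_erase.1 (Finset.mem_of_mem_erase hl)).1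
    have h4 : m ≠ l := (Finset.mem_erase.1 hm).1
    have h5 : m ≠ k := (Finset.mem_erase.1 (Finset.mem_of_mem_erase hm)).1
    have h6 : m ≠ j :=
      (Finset.mem_erase.1 (Finset.mem_of_mem_erase (Finset.mem_of_mem_erase hm))).1
    exact equad hmeas hindep hint hmom h1.symm h3.symm h6.symm h2.symm h5.symm h4.symm
  constructor
  · exact integrable_finset_sum _ fun j _ => integrable_finset_sum _ fun k hk =>
      integrable_finset_sum _ fun l hl => integrable_finset_sum _ fun m hm =>
        (hterm j k l m hk hl hm).1
  · rw [integral_finset_sum _ fun j _ => integrable_finset_sum _ fun k hk =>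
      integrable_finset_sum _ fun l hl => integrable_finset_sum _ fun m hm =>
        (hterm j k l m hk hl hm).1]
    have key : ∀ j : Fin N,
        (∫ ω, ∑ k ∈ Finset.univ.erase j, ∑ l ∈ (Finset.univ.erase j).erase k,
            ∑ m ∈ ((Finset.univ.erase j).erase k).erase l,
              v j ω * v k ω * v l ω * v m ω ∂ℙ)
          = ((N : ℝ) - 1) * (((N : ℝ) - 2) * (((N : ℝ) - 3)
              * (J 1 * J 1 * J 1 * J 1))) := by
      intro j
      rw [integral_finset_sum _ fun k hk => integrable_finset_sum _ fun l hl =>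
        integrable_finset_sum _ fun m hm => (hterm j k l m hk hl hm).1]
      have hkk : ∀ k ∈ Finset.univ.erase j,
          (∫ ω, ∑ l ∈ (Finset.univ.erase j).erase k,
              ∑ m ∈ ((Finset.univ.erase j).erase k).erase l,
                v j ω * v k ω * v l ω * v m ω ∂ℙ)
            = ((N : ℝ) - 2) * (((N : ℝ) - 3) * (J 1 * J 1 * J 1 * J 1)) := by
        intro k hk
        rw [integral_finset_sum _ fun l hl => integrable_finset_sum _ fun m hm =>
          (hterm j k l m hk hl hm).1]
        have hll : ∀ l ∈ (Finset.univ.erase j).erase k,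
            (∫ ω, ∑ m ∈ ((Finset.univ.erase j).erase k).erase l,
                v j ω * v k ω * v l ω * v m ω ∂ℙ)
              = ((N : ℝ) - 3) * (J 1 * J 1 * J 1 * J 1) := by
          intro l hl
          rw [integral_finset_sum _ fun m hm => (hterm j k l m hk hl hm).1,
            Finset.sum_congr rfl fun m hm => (hterm j k l m hk hl hm).2, Finset.sum_const,
            Finset.card_erase_of_mem hl, Finset.card_erase_of_mem hk,
            Finset.card_erase_of_mem (Finset.mem_univ j), Finset.card_univ, Fintype.card_fin,
            nsmul_eq_mul, show N - 1 - 1 - 1 = N - 3 by omega, Nat.cast_sub (by omega),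
            Nat.cast_ofNat]
        rw [Finset.sum_congr rfl hll, Finset.sum_const, Finset.card_erase_of_mem hk,
          Finset.card_erase_of_mem (Finset.mem_univ j), Finset.card_univ, Fintype.card_fin,
          nsmul_eq_mul, show N - 1 - 1 = N - 2 by omega, Nat.cast_sub (by omega),
          Nat.cast_ofNat]
      rw [Finset.sum_congr rfl hkk, Finset.sum_const,
        Finset.card_erase_of_mem (Finset.mem_univ j), Finset.card_univ, Fintype.card_fin,
        nsmul_eq_mul, Nat.cast_sub (by omega), Nat.cast_one]
    rw [Finset.sum_congr rfl fun j _ => key j, Finset.sum_const, Finset.card_univ,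
      Fintype.card_fin, nsmul_eq_mul]
    ring

end AuxProb



set_option maxHeartbeats 4000000 in
/-- The estimator `E₄ = (N^{\underline 2} Σ₄ − 4Σ₂²)/(N^{\underline 4} N³)
+ 2Σ₂²/(N^{\underline 4} N^{\underline 2} N²)` is an unbiased estimator of `Var(E₂)`. -/
theorem e4_unbiased
    {Ω : Type*} [MeasureSpace Ω] [IsProbabilityMeasure (ℙ : Measure Ω)]
    (N : ℕ) (hN : 4 ≤ N) (w : Fin N → Ω → ℝ) (J : ℕ → ℝ)
    (hindep : iIndepFun w ℙ)
    (hident : ∀ i j, IdentDistrib (w i) (w j) ℙ ℙ)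
    (hL4 : ∀ i, MemLp (w i) 4 ℙ)
    (hmom : ∀ (i : Fin N) (q : ℕ), q ≤ 4 → (∫ ω, (w i ω) ^ q ∂ℙ) = J q) :
    (∫ ω,
        (let S : ℕ → ℝ := fun p => ∑ j : Fin N, w j ω ^ p
         let Sig2 : ℝ := (N : ℝ) * S 2 - S 1 ^ 2
         let Sig4 : ℝ := (N : ℝ) * S 4 - 4 * S 3 * S 1 + 3 * S 2 ^ 2
         let d2 : ℝ := (N : ℝ) * ((N : ℝ) - 1)
         let d4 : ℝ := (N : ℝ) * ((N : ℝ) - 1) * ((N : ℝ) - 2) * ((N : ℝ) - 3)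
         (1 / (d4 * (N : ℝ) ^ 3)) * (d2 * Sig4 - 4 * Sig2 ^ 2)
           + (2 / (d4 * d2 * (N : ℝ) ^ 2)) * Sig2 ^ 2) ∂ℙ)
      = (1 / (N : ℝ) ^ 3)
          * (J 4 - 4 * J 3 * J 1 + 3 * J 2 ^ 2 - 4 * (J 2 - J 1 ^ 2) ^ 2)
        + (2 / ((N : ℝ) * ((N : ℝ) - 1) * (N : ℝ) ^ 2)) * (J 2 - J 1 ^ 2) ^ 2 := by
  classical
  obtain ⟨A, hA⟩ : ∃ a : ℝ,
      a = 1 / ((N : ℝ) * ((N : ℝ) - 1) * ((N : ℝ) - 2) * ((N : ℝ) - 3) * (N : ℝ) ^ 3) :=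
    ⟨_, rfl⟩
  obtain ⟨B, hB⟩ : ∃ b : ℝ,
      b = 2 / ((N : ℝ) * ((N : ℝ) - 1) * ((N : ℝ) - 2) * ((N : ℝ) - 3)
        * ((N : ℝ) * ((N : ℝ) - 1)) * (N : ℝ) ^ 2) := ⟨_, rfl⟩
  set v : Fin N → Ω → ℝ := fun i => (hL4 i).1.mk (w i) with hvdef
  have hvmeas : ∀ i, Measurable (v i) := fun i => (hL4 i).1.stronglyMeasurable_mk.measurable
  have hae : ∀ i, w i =ᵐ[ℙ] v i := fun i => (hL4 i).1.ae_eq_mk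
  have hvindep : iIndepFun v ℙ := iIndep_congr hindep hae
  have hvL4 : ∀ i, MemLp (v i) 4 ℙ := fun i => (hL4 i).ae_eq (hae i)
  have hvint : ∀ i (q : ℕ), q ≤ 4 → Integrable (fun ω => v i ω ^ q) ℙ := fun i q hq =>
    integrable_pow_of_memL4 (hvmeas i) (hvL4 i) hq
  have hvmom : ∀ i (q : ℕ), q ≤ 4 → (∫ ω, v i ω ^ q ∂ℙ) = J q := by
    intro i q hq
    rw [← hmom i q hq]
    refine integral_congr_ae ?_
    filter_upwards [hae i] with ω hω
    rw [hω]
  have key : (∫ ω,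
        (let S : ℕ → ℝ := fun p => ∑ j : Fin N, w j ω ^ p
         let Sig2 : ℝ := (N : ℝ) * S 2 - S 1 ^ 2
         let Sig4 : ℝ := (N : ℝ) * S 4 - 4 * S 3 * S 1 + 3 * S 2 ^ 2
         let d2 : ℝ := (N : ℝ) * ((N : ℝ) - 1)
         let d4 : ℝ := (N : ℝ) * ((N : ℝ) - 1) * ((N : ℝ) - 2) * ((N : ℝ) - 3)
         (1 / (d4 * (N : ℝ) ^ 3)) * (d2 * Sig4 - 4 * Sig2 ^ 2)
           + (2 / (d4 * d2 * (N : ℝ) ^ 2)) * Sig2 ^ 2) ∂ℙ)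
      = ∫ ω, (((A * ((N : ℝ) * ((N : ℝ) - 1))) * ((N : ℝ) - 1) + (B - 4 * A) * ((N : ℝ) - 1) ^ 2) * psum (fun j => v j ω) 4
           + ((-4 * (A * ((N : ℝ) * ((N : ℝ) - 1))) - 2 * (B - 4 * A) * (N : ℝ) + (B - 4 * A)) * Dtwo (fun j => v j ω) 3 1
           + ((-2 * (B - 4 * A) * (N : ℝ) + 3 * (B - 4 * A)) * Dtwo (fun j => v j ω) 1 3
           + ((3 * (A * ((N : ℝ) * ((N : ℝ) - 1))) + (B - 4 * A) * (N : ℝ) ^ 2 - 2 * (B - 4 * A) * (N : ℝ) + 3 * (B - 4 * A)) * Dtwo (fun j => v j ω) 2 2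
           + ((-2 * (B - 4 * A) * (N : ℝ) + (B - 4 * A)) * Dthree (fun j => v j ω) 1 1 2
           + ((3 * (B - 4 * A)) * Dthree (fun j => v j ω) 1 2 1
           + ((2 * (B - 4 * A)) * Dthree (fun j => v j ω) 2 1 1
           + (B - 4 * A) * Dfour (fun j => v j ω)))))))) ∂ℙ := by
    refine integral_congr_ae ?_
    filter_upwards [ae_all_iff.2 hae] with ω hω
    simp only [hω]
    have e : ∀ p : ℕ, (∑ j : Fin N, v j ω ^ p) = psum (fun j => v j ω) p := fun p => rfl
    simp only [e]
    rw [← hA, ← hB]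
    set xx : Fin N → ℝ := fun j => v j ω with hxx
    have H1 : psum xx 3 * psum xx 1 = psum xx 4 + Dtwo xx 3 1 := by
      simpa using psum_mul xx 3 1
    have H2 : psum xx 2 * psum xx 2 = psum xx 4 + Dtwo xx 2 2 := by
      simpa using psum_mul xx 2 2
    have H3 : psum xx 1 * psum xx 1 = psum xx 2 + Dtwo xx 1 1 := by
      simpa using psum_mul xx 1 1
    have H4 : psum xx 2 * Dtwo xx 1 1 = Dtwo xx 3 1 + Dtwo xx 1 3 + Dthree xx 1 1 2 := by
      simpa using psum_mul_Dtwo xx 1 1 2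
    have H5 : psum xx 1 * Dtwo xx 1 1 = Dtwo xx 2 1 + Dtwo xx 1 2 + Dthree xx 1 1 1 := by
      simpa using psum_mul_Dtwo xx 1 1 1
    have H6 : psum xx 1 * Dtwo xx 2 1 = Dtwo xx 3 1 + Dtwo xx 2 2 + Dthree xx 2 1 1 := by
      simpa using psum_mul_Dtwo xx 2 1 1
    have H7 : psum xx 1 * Dtwo xx 1 2 = Dtwo xx 2 2 + Dtwo xx 1 3 + Dthree xx 1 2 1 := by
      simpa using psum_mul_Dtwo xx 1 2 1
    have H8 : psum xx 1 * psum xx 2 = psum xx 3 + Dtwo xx 1 2 := by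
      simpa using psum_mul xx 1 2
    have H9 : psum xx 1 * psum xx 3 = psum xx 4 + Dtwo xx 1 3 := by
      simpa using psum_mul xx 1 3
    have H10 : psum xx 1 * Dthree xx 1 1 1
        = Dthree xx 2 1 1 + Dthree xx 1 2 1 + Dthree xx 1 1 2 + Dfour xx :=
      psum_mul_Dthree xx
    have HA : psum xx 2 * (psum xx 1 * psum xx 1)
        = psum xx 4 + Dtwo xx 2 2 + Dtwo xx 3 1 + Dtwo xx 1 3 + Dthree xx 1 1 2 := by
      rw [H3, mul_add, H2, H4]; ring
    have HB : (psum xx 1 * psum xx 1) * (psum xx 1 * psum xx 1)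
        = psum xx 4 + 3 * Dtwo xx 1 3 + Dtwo xx 3 1 + 3 * Dtwo xx 2 2
          + 3 * Dthree xx 1 2 1 + 2 * Dthree xx 2 1 1 + Dthree xx 1 1 2 + Dfour xx := by
      have hcube : psum xx 1 * (psum xx 1 * psum xx 1)
          = psum xx 3 + 2 * Dtwo xx 1 2 + Dtwo xx 2 1 + Dthree xx 1 1 1 := by
        rw [H3, mul_add, H8, H5]; ring
      calc (psum xx 1 * psum xx 1) * (psum xx 1 * psum xx 1)
          = psum xx 1 * (psum xx 1 * (psum xx 1 * psum xx 1)) := by ring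
        _ = psum xx 1 * (psum xx 3 + 2 * Dtwo xx 1 2 + Dtwo xx 2 1 + Dthree xx 1 1 1) := by
            rw [hcube]
        _ = psum xx 1 * psum xx 3 + 2 * (psum xx 1 * Dtwo xx 1 2)
              + psum xx 1 * Dtwo xx 2 1 + psum xx 1 * Dthree xx 1 1 1 := by ring
        _ = _ := by rw [H9, H7, H6, H10]; ring
    linear_combination (-4 * (A * ((N : ℝ) * ((N : ℝ) - 1)))) * H1 + (3 * (A * ((N : ℝ) * ((N : ℝ) - 1))) + (B - 4 * A) * (N : ℝ) ^ 2) * H2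
      + (-2 * (B - 4 * A) * (N : ℝ)) * HA + (B - 4 * A) * HB
  rw [key]
  have I1 := int_psum hvmeas hvindep hvint hvmom (by norm_num : (4:ℕ) ≤ 4)
  have I2 := int_Dtwo hvmeas hvindep hvint hvmom (by norm_num : (3:ℕ) ≤ 4) (by norm_num : (1:ℕ) ≤ 4)
  have I3 := int_Dtwo hvmeas hvindep hvint hvmom (by norm_num : (1:ℕ) ≤ 4) (by norm_num : (3:ℕ) ≤ 4)
  have I4 := int_Dtwo hvmeas hvindep hvint hvmom (by norm_num : (2:ℕ) ≤ 4) (by norm_num : (2:ℕ) ≤ 4)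
  have I5 := int_Dthree hvmeas hvindep hvint hvmom hN (by norm_num : (1:ℕ) ≤ 4) (by norm_num : (1:ℕ) ≤ 4) (by norm_num : (2:ℕ) ≤ 4)
  have I6 := int_Dthree hvmeas hvindep hvint hvmom hN (by norm_num : (1:ℕ) ≤ 4) (by norm_num : (2:ℕ) ≤ 4) (by norm_num : (1:ℕ) ≤ 4)
  have I7 := int_Dthree hvmeas hvindep hvint hvmom hN (by norm_num : (2:ℕ) ≤ 4) (by norm_num : (1:ℕ) ≤ 4) (by norm_num : (1:ℕ) ≤ 4)
  have I8 := int_Dfour hvmeas hvindep hvint hvmom hN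
  have g1 : Integrable (fun ω => ((A * ((N : ℝ) * ((N : ℝ) - 1))) * ((N : ℝ) - 1) + (B - 4 * A) * ((N : ℝ) - 1) ^ 2) * psum (fun j => v j ω) 4) ℙ := I1.1.const_mul _
  have g2 : Integrable (fun ω => (-4 * (A * ((N : ℝ) * ((N : ℝ) - 1))) - 2 * (B - 4 * A) * (N : ℝ) + (B - 4 * A)) * Dtwo (fun j => v j ω) 3 1) ℙ := I2.1.const_mul _
  have g3 : Integrable (fun ω => (-2 * (B - 4 * A) * (N : ℝ) + 3 * (B - 4 * A)) * Dtwo (fun j => v j ω) 1 3) ℙ := I3.1.const_mul _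
  have g4 : Integrable (fun ω => (3 * (A * ((N : ℝ) * ((N : ℝ) - 1))) + (B - 4 * A) * (N : ℝ) ^ 2 - 2 * (B - 4 * A) * (N : ℝ) + 3 * (B - 4 * A)) * Dtwo (fun j => v j ω) 2 2) ℙ := I4.1.const_mul _
  have g5 : Integrable (fun ω => (-2 * (B - 4 * A) * (N : ℝ) + (B - 4 * A)) * Dthree (fun j => v j ω) 1 1 2) ℙ := I5.1.const_mul _
  have g6 : Integrable (fun ω => (3 * (B - 4 * A)) * Dthree (fun j => v j ω) 1 2 1) ℙ := I6.1.const_mul _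
  have g7 : Integrable (fun ω => (2 * (B - 4 * A)) * Dthree (fun j => v j ω) 2 1 1) ℙ := I7.1.const_mul _
  have g8 : Integrable (fun ω => (B - 4 * A) * Dfour (fun j => v j ω)) ℙ := I8.1.const_mul _
  have s78 : Integrable (fun ω => (2 * (B - 4 * A)) * Dthree (fun j => v j ω) 2 1 1 + (B - 4 * A) * Dfour (fun j => v j ω)) ℙ := g7.add g8
  have s678 : Integrable (fun ω => (3 * (B - 4 * A)) * Dthree (fun j => v j ω) 1 2 1 + ((2 * (B - 4 * A)) * Dthree (fun j => v j ω) 2 1 1 + (B - 4 * A) * Dfour (fun j => v j ω))) ℙ := g6.add s78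
  have s5678 : Integrable (fun ω => (-2 * (B - 4 * A) * (N : ℝ) + (B - 4 * A)) * Dthree (fun j => v j ω) 1 1 2 + ((3 * (B - 4 * A)) * Dthree (fun j => v j ω) 1 2 1 + ((2 * (B - 4 * A)) * Dthree (fun j => v j ω) 2 1 1 + (B - 4 * A) * Dfour (fun j => v j ω)))) ℙ := g5.add s678
  have s45678 : Integrable (fun ω => (3 * (A * ((N : ℝ) * ((N : ℝ) - 1))) + (B - 4 * A) * (N : ℝ) ^ 2 - 2 * (B - 4 * A) * (N : ℝ) + 3 * (B - 4 * A)) * Dtwo (fun j => v j ω) 2 2 + ((-2 * (B - 4 * A) * (N : ℝ) + (B - 4 * A)) * Dthree (fun j => v j ω) 1 1 2 + ((3 * (B - 4 * A)) * Dthree (fun j => v j ω) 1 2 1 + ((2 * (B - 4 * A)) * Dthree (fun j => v j ω) 2 1 1 + (B - 4 * A) * Dfour (fun j => v j ω))))) ℙ := g4.add s5678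
  have s345678 : Integrable (fun ω => (-2 * (B - 4 * A) * (N : ℝ) + 3 * (B - 4 * A)) * Dtwo (fun j => v j ω) 1 3 + ((3 * (A * ((N : ℝ) * ((N : ℝ) - 1))) + (B - 4 * A) * (N : ℝ) ^ 2 - 2 * (B - 4 * A) * (N : ℝ) + 3 * (B - 4 * A)) * Dtwo (fun j => v j ω) 2 2 + ((-2 * (B - 4 * A) * (N : ℝ) + (B - 4 * A)) * Dthree (fun j => v j ω) 1 1 2 + ((3 * (B - 4 * A)) * Dthree (fun j => v j ω) 1 2 1 + ((2 * (B - 4 * A)) * Dthree (fun j => v j ω) 2 1 1 + (B - 4 * A) * Dfour (fun j => v j ω)))))) ℙ := g3.add s45678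
  have s2345678 : Integrable (fun ω => (-4 * (A * ((N : ℝ) * ((N : ℝ) - 1))) - 2 * (B - 4 * A) * (N : ℝ) + (B - 4 * A)) * Dtwo (fun j => v j ω) 3 1 + ((-2 * (B - 4 * A) * (N : ℝ) + 3 * (B - 4 * A)) * Dtwo (fun j => v j ω) 1 3 + ((3 * (A * ((N : ℝ) * ((N : ℝ) - 1))) + (B - 4 * A) * (N : ℝ) ^ 2 - 2 * (B - 4 * A) * (N : ℝ) + 3 * (B - 4 * A)) * Dtwo (fun j => v j ω) 2 2 + ((-2 * (B - 4 * A) * (N : ℝ) + (B - 4 * A)) * Dthree (fun j => v j ω) 1 1 2 + ((3 * (B - 4 * A)) * Dthree (fun j => v j ω) 1 2 1 + ((2 * (B - 4 * A)) * Dthree (fun j => v j ω) 2 1 1 + (B - 4 * A) * Dfour (fun j => v j ω))))))) ℙ := g2.add s345678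
  rw [integral_add g1 s2345678, integral_add g2 s345678, integral_add g3 s45678,
    integral_add g4 s5678, integral_add g5 s678, integral_add g6 s78, integral_add g7 g8]
  rw [integral_const_mul, integral_const_mul, integral_const_mul, integral_const_mul,
    integral_const_mul, integral_const_mul, integral_const_mul, integral_const_mul]
  rw [I1.2, I2.2, I3.2, I4.2, I5.2, I6.2, I7.2, I8.2]
  have h4n : (4:ℝ) ≤ (N : ℝ) := by exact_mod_cast hN
  have hn0 : ((N : ℝ)) ≠ 0 := by linarith
  have hn1 : ((N : ℝ)) - 1 ≠ 0 := by linarith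
  have hn2 : ((N : ℝ)) - 2 ≠ 0 := by linarith
  have hn3 : ((N : ℝ)) - 3 ≠ 0 := by linarith
  rw [hA, hB]
  field_simp
  ring
end

section
/- For a real random variable w with finite fourth moment, writing w = J_1 + u with E[u] = 0: (a) J_2 − J_1² = E[u²]; (b) J_4 − 4J_3J_1 + 3J_2² = E[u⁴] + 3(E[u²])²; (c) J_4 − 4J_3J_1 + 3J_2² − 4(J_2 − J_1²)² = (1/2)E[(u(X)² − u(Y)²)²] where X, Y are independent copies; in particular both (b) and (c) are nonnegative. -/
open MeasureTheory ProbabilityTheory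
open scoped ENNReal

private lemma aux_pow_int {Ω : Type*} [MeasureSpace Ω] [IsProbabilityMeasure (ℙ : Measure Ω)]
    {f : Ω → ℝ} (hf : MemLp f 4 ℙ) {q : ℕ} (hq : q ≤ 4) :
    Integrable (fun ω => f ω ^ q) ℙ := by
  have h2 : MemLp (f • f) 2 ℙ := by
    refine hf.smul hf (hpqr := ⟨?_⟩)
    symm
    rw [← two_mul, show (4:ℝ≥0∞) = 2*2 by norm_num,
      ENNReal.mul_inv (by norm_num) (by norm_num), ← mul_assoc,
      ENNReal.mul_inv_cancel (by norm_num) (by norm_num), one_mul]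
  have h1 : MemLp ((f • f) • (f • f)) 1 ℙ := by
    refine h2.smul h2 (hpqr := ⟨?_⟩)
    rw [inv_one]
    exact ENNReal.inv_two_add_inv_two
  have h4 : Integrable (fun ω => f ω ^ 4) ℙ := by
    have h := memLp_one_iff_integrable.mp h1
    have he : ((f • f) • (f • f)) = fun ω => f ω ^ 4 := by
      funext ω; simp only [Pi.smul_apply, smul_eq_mul, Pi.mul_apply, Pi.pow_apply]; ring
    rwa [he] at h
  refine ((integrable_const (1:ℝ)).add h4).mono
    ((hf.1.aemeasurable.pow_const q).aestronglyMeasurable) ?_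
  filter_upwards with ω
  simp only [Pi.add_apply]
  rw [Real.norm_eq_abs, Real.norm_eq_abs, abs_pow]
  have h0 : (0:ℝ) ≤ f ω ^ 4 := by positivity
  rw [abs_of_nonneg (by linarith : (0:ℝ) ≤ 1 + f ω ^ 4)]
  rcases le_or_gt (|f ω|) 1 with h | h
  · have hp : |f ω| ^ q ≤ 1 := pow_le_one₀ (abs_nonneg _) h
    linarith
  · have hp : |f ω| ^ q ≤ |f ω| ^ 4 := pow_le_pow_right₀ h.le hq
    have h24 : |f ω| ^ 4 = f ω ^ 4 := by rw [← abs_pow, abs_of_nonneg h0]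
    linarith

/-- For `w` with finite fourth moment and `u = w − J₁` (so `E[u] = 0`):
(a) `J₂ − J₁² = E[u²]`; (b) `J₄ − 4J₃J₁ + 3J₂² = E[u⁴] + 3(E[u²])²`;
(c) `J₄ − 4J₃J₁ + 3J₂² − 4(J₂ − J₁²)² = (1/2)E[(u(X)² − u(Y)²)²]` for independent copies
`X, Y`; in particular (b) and (c) are nonnegative. -/
theorem centered_moment_identities
    {Ω : Type*} [MeasureSpace Ω] [IsProbabilityMeasure (ℙ : Measure Ω)]
    (w X Y : Ω → ℝ) (J : ℕ → ℝ)
    (hL4 : MemLp w 4 ℙ)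
    (hmom : ∀ q : ℕ, q ≤ 4 → (∫ ω, (w ω) ^ q ∂ℙ) = J q)
    (hXw : IdentDistrib X w ℙ ℙ) (hYw : IdentDistrib Y w ℙ ℙ)
    (hXY : IndepFun X Y ℙ) :
    (J 2 - J 1 ^ 2 = ∫ ω, (w ω - J 1) ^ 2 ∂ℙ)
    ∧ (J 4 - 4 * J 3 * J 1 + 3 * J 2 ^ 2
        = (∫ ω, (w ω - J 1) ^ 4 ∂ℙ) + 3 * (∫ ω, (w ω - J 1) ^ 2 ∂ℙ) ^ 2)
    ∧ (J 4 - 4 * J 3 * J 1 + 3 * J 2 ^ 2 - 4 * (J 2 - J 1 ^ 2) ^ 2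
        = (1 / 2) * ∫ ω, ((X ω - J 1) ^ 2 - (Y ω - J 1) ^ 2) ^ 2 ∂ℙ)
    ∧ 0 ≤ J 4 - 4 * J 3 * J 1 + 3 * J 2 ^ 2
    ∧ 0 ≤ J 4 - 4 * J 3 * J 1 + 3 * J 2 ^ 2 - 4 * (J 2 - J 1 ^ 2) ^ 2 := by
  set m := J 1 with hm
  -- integrability of powers of w
  have key : ∀ q : ℕ, q ≤ 4 → Integrable (fun ω => w ω ^ q) ℙ := fun q hq => aux_pow_int hL4 hq
  have hw1 : Integrable w ℙ := by simpa using key 1 (by norm_num)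
  have hIw1 : ∫ ω, w ω ∂ℙ = J 1 := by simpa using hmom 1 (by norm_num)
  -- (a) expansion
  have ha : ∫ ω, (w ω - m) ^ 2 ∂ℙ = J 2 - 2 * m * J 1 + m ^ 2 := by
    have he : (fun ω => (w ω - m) ^ 2)
        = fun ω => ((w ω) ^ 2 - (2 * m) * (w ω)) + m ^ 2 := funext fun ω => by ring
    have isub : Integrable (fun ω => (w ω) ^ 2 - (2 * m) * (w ω)) ℙ :=
      (key 2 (by norm_num)).sub (hw1.const_mul _)
    rw [he, integral_add isub (integrable_const _),
      integral_sub (key 2 (by norm_num)) (hw1.const_mul _), integral_const_mul,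
      hmom 2 (by norm_num), hIw1, integral_const]
    simp [measure_univ]
  -- (b) expansion
  have hb : ∫ ω, (w ω - m) ^ 4 ∂ℙ
      = J 4 - 4 * m * J 3 + 6 * m ^ 2 * J 2 - 4 * m ^ 3 * J 1 + m ^ 4 := by
    have he : (fun ω => (w ω - m) ^ 4)
        = fun ω => ((((w ω) ^ 4 - (4 * m) * (w ω) ^ 3) + (6 * m ^ 2) * (w ω) ^ 2)
            - (4 * m ^ 3) * (w ω)) + m ^ 4 := funext fun ω => by ring
    have i4 := key 4 le_rfl
    have i3c := (key 3 (by norm_num)).const_mul (4 * m)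
    have i2c := (key 2 (by norm_num)).const_mul (6 * m ^ 2)
    have i1c := hw1.const_mul (4 * m ^ 3)
    have j1 : Integrable (fun ω => (w ω) ^ 4 - (4 * m) * (w ω) ^ 3) ℙ := i4.sub i3c
    have j2 : Integrable (fun ω => ((w ω) ^ 4 - (4 * m) * (w ω) ^ 3)
        + (6 * m ^ 2) * (w ω) ^ 2) ℙ := j1.add i2c
    have j3 : Integrable (fun ω => (((w ω) ^ 4 - (4 * m) * (w ω) ^ 3)
        + (6 * m ^ 2) * (w ω) ^ 2) - (4 * m ^ 3) * (w ω)) ℙ := j2.sub i1c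
    rw [he, integral_add j3 (integrable_const _),
      integral_sub j2 i1c, integral_add j1 i2c,
      integral_sub i4 i3c, integral_const_mul, integral_const_mul, integral_const_mul,
      hmom 4 le_rfl, hmom 3 (by norm_num), hmom 2 (by norm_num), hIw1, integral_const]
    simp [measure_univ]
  -- identically distributed transfers
  have hf2 : Measurable (fun x : ℝ => (x - m) ^ 2) := by fun_prop
  have hf4 : Measurable (fun x : ℝ => (x - m) ^ 4) := by fun_prop
  have hX4 : MemLp X 4 ℙ := hXw.symm.memLp_snd hL4
  have hY4 : MemLp Y 4 ℙ := hYw.symm.memLp_snd hL4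
  have hXc : MemLp (fun ω => X ω - m) 4 ℙ := hX4.sub (memLp_const m)
  have hYc : MemLp (fun ω => Y ω - m) 4 ℙ := hY4.sub (memLp_const m)
  have hX2int : Integrable (fun ω => (X ω - m) ^ 2) ℙ := aux_pow_int hXc (by norm_num)
  have hY2int : Integrable (fun ω => (Y ω - m) ^ 2) ℙ := aux_pow_int hYc (by norm_num)
  have hX4int : Integrable (fun ω => (X ω - m) ^ 4) ℙ := aux_pow_int hXc le_rfl
  have hY4int : Integrable (fun ω => (Y ω - m) ^ 4) ℙ := aux_pow_int hYc le_rfl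
  have hXid2 : ∫ ω, (X ω - m) ^ 2 ∂ℙ = ∫ ω, (w ω - m) ^ 2 ∂ℙ :=
    (hXw.comp hf2).integral_eq
  have hYid2 : ∫ ω, (Y ω - m) ^ 2 ∂ℙ = ∫ ω, (w ω - m) ^ 2 ∂ℙ :=
    (hYw.comp hf2).integral_eq
  have hXid4 : ∫ ω, (X ω - m) ^ 4 ∂ℙ = ∫ ω, (w ω - m) ^ 4 ∂ℙ :=
    (hXw.comp hf4).integral_eq
  have hYid4 : ∫ ω, (Y ω - m) ^ 4 ∂ℙ = ∫ ω, (w ω - m) ^ 4 ∂ℙ :=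
    (hYw.comp hf4).integral_eq
  -- independence of the squared centered variables
  have hIndep2 : IndepFun (fun ω => (X ω - m) ^ 2) (fun ω => (Y ω - m) ^ 2) ℙ :=
    hXY.comp hf2 hf2
  have hprod : Integrable (fun ω => (X ω - m) ^ 2 * (Y ω - m) ^ 2) ℙ :=
    hIndep2.integrable_mul hX2int hY2int
  have hmul : ∫ ω, (X ω - m) ^ 2 * (Y ω - m) ^ 2 ∂ℙ
      = (∫ ω, (w ω - m) ^ 2 ∂ℙ) * (∫ ω, (w ω - m) ^ 2 ∂ℙ) := by
    rw [hIndep2.integral_fun_mul_eq_mul_integral hX2int.1 hY2int.1, hXid2, hYid2]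
  have hc : ∫ ω, ((X ω - m) ^ 2 - (Y ω - m) ^ 2) ^ 2 ∂ℙ
      = 2 * (∫ ω, (w ω - m) ^ 4 ∂ℙ) - 2 * (∫ ω, (w ω - m) ^ 2 ∂ℙ) ^ 2 := by
    have he : (fun ω => ((X ω - m) ^ 2 - (Y ω - m) ^ 2) ^ 2)
        = fun ω => ((X ω - m) ^ 4 - 2 * ((X ω - m) ^ 2 * (Y ω - m) ^ 2)) + (Y ω - m) ^ 4 :=
      funext fun ω => by ring
    have k1 : Integrable (fun ω => 2 * ((X ω - m) ^ 2 * (Y ω - m) ^ 2)) ℙ :=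
      hprod.const_mul 2
    have k2 : Integrable (fun ω => (X ω - m) ^ 4
        - 2 * ((X ω - m) ^ 2 * (Y ω - m) ^ 2)) ℙ := hX4int.sub k1
    rw [he, integral_add k2 hY4int,
      integral_sub hX4int k1, integral_const_mul, hmul, hXid4, hYid4]
    ring
  -- nonnegativity of the centered integrals
  have hIu4 : 0 ≤ ∫ ω, (w ω - m) ^ 4 ∂ℙ := integral_nonneg fun ω => by positivity
  have hcint : 0 ≤ ∫ ω, ((X ω - m) ^ 2 - (Y ω - m) ^ 2) ^ 2 ∂ℙ :=
    integral_nonneg fun ω => by positivity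
  refine ⟨by rw [ha]; ring, by rw [hb, ha]; ring, by rw [hc, hb, ha]; ring, ?_, ?_⟩
  · have hB : J 4 - 4 * J 3 * J 1 + 3 * J 2 ^ 2
        = (∫ ω, (w ω - m) ^ 4 ∂ℙ) + 3 * (∫ ω, (w ω - m) ^ 2 ∂ℙ) ^ 2 := by
      rw [hb, ha]; ring
    have h3 : 0 ≤ 3 * (∫ ω, (w ω - m) ^ 2 ∂ℙ) ^ 2 := by positivity
    linarith [hB]
  · have hC : J 4 - 4 * J 3 * J 1 + 3 * J 2 ^ 2 - 4 * (J 2 - J 1 ^ 2) ^ 2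
        = (1 / 2) * ∫ ω, ((X ω - m) ^ 2 - (Y ω - m) ^ 2) ^ 2 ∂ℙ := by
      rw [hc, hb, ha]; ring
    linarith [hC]
end

section
/- The quantity J_4 − 4J_3J_1 + 3J_2² − 4(J_2 − J_1²)² equals (1/2)∫∫ P(x)P(y)(u(x)² − u(y)²)² dx dy where u(x) = w(x) − J_1, and is therefore nonnegative. -/
open MeasureTheory

/-- With a probability density `P` on `Γ` and moments `J_p = ∫ P(x) w(x)^p dx`,
the quantity `J₄ − 4J₃J₁ + 3J₂² − 4(J₂ − J₁²)²` equals
`(1/2)∫∫ P(x)P(y)(u(x)² − u(y)²)² dx dy` with `u = w − J₁`, hence is nonnegative. -/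
theorem quartic_combination_eq_double_integral
    {Γ : Type*} [MeasurableSpace Γ] (μ : Measure Γ) [SigmaFinite μ]
    (P w : Γ → ℝ) (J : ℕ → ℝ)
    (hPmeas : Measurable P) (hwmeas : Measurable w)
    (hPnonneg : ∀ x, 0 ≤ P x) (hPprob : (∫ x, P x ∂μ) = 1)
    (hint : ∀ q : ℕ, q ≤ 4 → Integrable (fun x => P x * w x ^ q) μ)
    (hmom : ∀ q : ℕ, q ≤ 4 → (∫ x, P x * w x ^ q ∂μ) = J q)
    (hint2 : Integrable (fun z : Γ × Γ =>
        P z.1 * P z.2 * ((w z.1 - J 1) ^ 2 - (w z.2 - J 1) ^ 2) ^ 2) (μ.prod μ)) :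
    (J 4 - 4 * J 3 * J 1 + 3 * J 2 ^ 2 - 4 * (J 2 - J 1 ^ 2) ^ 2
      = (1 / 2) * ∫ z : Γ × Γ,
          P z.1 * P z.2 * ((w z.1 - J 1) ^ 2 - (w z.2 - J 1) ^ 2) ^ 2 ∂(μ.prod μ))
    ∧ 0 ≤ J 4 - 4 * J 3 * J 1 + 3 * J 2 ^ 2 - 4 * (J 2 - J 1 ^ 2) ^ 2 := by
  set c := J 1 with hc
  have h0 := hint 0 (by norm_num)
  have h1 := hint 1 (by norm_num)
  have h2 := hint 2 (by norm_num)
  have h3 := hint 3 (by norm_num)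
  have h4 := hint 4 (by norm_num)
  have m0 := hmom 0 (by norm_num)
  have m1 := hmom 1 (by norm_num)
  have m2 := hmom 2 (by norm_num)
  have m3 := hmom 3 (by norm_num)
  have m4 := hmom 4 (by norm_num)
  have hp : Integrable P μ := by simpa using h0
  -- u² integrability and value
  have e2 : (fun x => P x * (w x - c) ^ 2)
      = fun x => P x * w x ^ 2 - (2*c) * (P x * w x ^ 1) + c^2 * (P x * w x ^ 0) := by
    funext x; ring
  have hJ0 : J 0 = 1 := by rw [← m0]; simpa using hPprob
  have hsub2 : Integrable (fun x => P x * w x ^ 2 - 2*c * (P x * w x ^ 1)) μ :=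
    h2.sub (h1.const_mul _)
  have hf : Integrable (fun x => P x * (w x - c) ^ 2) μ := by
    rw [e2]; exact hsub2.add (h0.const_mul (c^2))
  have K2 : (∫ x, P x * (w x - c) ^ 2 ∂μ) = J 2 - c ^ 2 := by
    rw [e2, integral_add hsub2 (h0.const_mul (c^2)),
      integral_sub h2 (h1.const_mul (2*c)), integral_const_mul, integral_const_mul,
      m0, m1, m2, ← hc, hJ0]
    ring
  have e4 : (fun x => P x * (w x - c) ^ 4)
      = fun x => P x * w x ^ 4 - 4*c * (P x * w x ^ 3) + 6*c^2 * (P x * w x ^ 2)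
          - 4*c^3 * (P x * w x ^ 1) + c^4 * (P x * w x ^ 0) := by
    funext x; ring
  have ha : Integrable (fun x => P x * w x ^ 4 - 4*c * (P x * w x ^ 3)) μ :=
    h4.sub (h3.const_mul _)
  have hb : Integrable (fun x => P x * w x ^ 4 - 4*c * (P x * w x ^ 3)
      + 6*c^2 * (P x * w x ^ 2)) μ := ha.add (h2.const_mul _)
  have hd : Integrable (fun x => P x * w x ^ 4 - 4*c * (P x * w x ^ 3)
      + 6*c^2 * (P x * w x ^ 2) - 4*c^3 * (P x * w x ^ 1)) μ := hb.sub (h1.const_mul _)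
  have hg : Integrable (fun x => P x * (w x - c) ^ 4) μ := by
    rw [e4]; exact hd.add (h0.const_mul (c^4))
  have K4 : (∫ x, P x * (w x - c) ^ 4 ∂μ) = J 4 - 4*c*J 3 + 6*c^2*J 2 - 3*c^4 := by
    rw [e4, integral_add hd (h0.const_mul (c^4)), integral_sub hb (h1.const_mul (4*c^3)),
      integral_add ha (h2.const_mul (6*c^2)), integral_sub h4 (h3.const_mul (4*c)),
      integral_const_mul, integral_const_mul, integral_const_mul, integral_const_mul,
      m0, m1, m2, m3, m4, ← hc, hJ0]
    ring
  have ez : (fun z : Γ × Γ => P z.1 * P z.2 * ((w z.1 - c) ^ 2 - (w z.2 - c) ^ 2) ^ 2)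
      = fun z => (P z.1 * (w z.1 - c)^4) * P z.2
          - (2:ℝ) * ((P z.1 * (w z.1 - c)^2) * (P z.2 * (w z.2 - c)^2))
          + P z.1 * (P z.2 * (w z.2 - c)^4) := by
    funext z; ring
  have hz1 : Integrable (fun z : Γ × Γ => (P z.1 * (w z.1 - c)^4) * P z.2) (μ.prod μ) :=
    hg.mul_prod hp
  have hz2 : Integrable (fun z : Γ × Γ =>
      (P z.1 * (w z.1 - c)^2) * (P z.2 * (w z.2 - c)^2)) (μ.prod μ) := hf.mul_prod hf
  have hz3 : Integrable (fun z : Γ × Γ => P z.1 * (P z.2 * (w z.2 - c)^4)) (μ.prod μ) :=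
    hp.mul_prod hg
  have hz12 : Integrable (fun z : Γ × Γ => (P z.1 * (w z.1 - c)^4) * P z.2
      - (2:ℝ) * ((P z.1 * (w z.1 - c)^2) * (P z.2 * (w z.2 - c)^2))) (μ.prod μ) :=
    hz1.sub (hz2.const_mul _)
  have key : (∫ z : Γ × Γ, P z.1 * P z.2 * ((w z.1 - c) ^ 2 - (w z.2 - c) ^ 2) ^ 2 ∂(μ.prod μ))
      = 2 * ((J 4 - 4*c*J 3 + 6*c^2*J 2 - 3*c^4) - (J 2 - c^2)^2) := by
    rw [ez, integral_add hz12 hz3, integral_sub hz1 (hz2.const_mul 2),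
      integral_const_mul,
      integral_prod_mul (fun x => P x * (w x - c)^4) P,
      integral_prod_mul (fun x => P x * (w x - c)^2) (fun x => P x * (w x - c)^2),
      integral_prod_mul P (fun x => P x * (w x - c)^4),
      K2, K4, hPprob]
    ring
  have hnn : 0 ≤ ∫ z : Γ × Γ,
      P z.1 * P z.2 * ((w z.1 - c) ^ 2 - (w z.2 - c) ^ 2) ^ 2 ∂(μ.prod μ) := by
    apply integral_nonneg
    intro z
    exact mul_nonneg (mul_nonneg (hPnonneg _) (hPnonneg _)) (sq_nonneg _)
  have heq : J 4 - 4 * J 3 * c + 3 * J 2 ^ 2 - 4 * (J 2 - c ^ 2) ^ 2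
      = (1 / 2) * ∫ z : Γ × Γ,
          P z.1 * P z.2 * ((w z.1 - c) ^ 2 - (w z.2 - c) ^ 2) ^ 2 ∂(μ.prod μ) := by
    rw [key]; ring
  exact ⟨heq, heq ▸ by linarith⟩
end

section
/- If each weight w_j ∈ {0,1} and S_1 = Nb with b ∈ [0,1], then Σ_2 = Σ_4 = N²a with a = b − b², and the estimator E_4 evaluates to E_4 = (1/N^{\underline{4}})((N^{\underline{2}}/N)a − ((4N³−6N²)/N^{\underline{2}})a²), which is strictly negative whenever a > (N−1)²/(N(4N−6)). -/
/-- Binary-weight counterexample: if every `w_j ∈ {0,1}` and `S₁ = N·b`, then with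
`a = b − b²` one has `Σ₂ = Σ₄ = N²a`,
`E₄ = (1/N^{\underline 4})((N^{\underline 2}/N)·a − ((4N³−6N²)/N^{\underline 2})·a²)`,
and `E₄ < 0` whenever `a > (N−1)²/(N(4N−6))`. -/
theorem binary_weights_e4_negative
    (N : ℕ) (hN : 5 ≤ N) (w : Fin N → ℝ) (hw : ∀ j, w j = 0 ∨ w j = 1)
    (b : ℝ) (hb : (∑ j : Fin N, w j) = N * b) :
    let S : ℕ → ℝ := fun p => ∑ j : Fin N, w j ^ p
    let Sig2 : ℝ := (N : ℝ) * S 2 - S 1 ^ 2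
    let Sig4 : ℝ := (N : ℝ) * S 4 - 4 * S 3 * S 1 + 3 * S 2 ^ 2
    let d2 : ℝ := (N : ℝ) * ((N : ℝ) - 1)
    let d4 : ℝ := (N : ℝ) * ((N : ℝ) - 1) * ((N : ℝ) - 2) * ((N : ℝ) - 3)
    let a : ℝ := b - b ^ 2
    let E4 : ℝ := (1 / (d4 * (N : ℝ) ^ 3)) * (d2 * Sig4 - 4 * Sig2 ^ 2)
        + (2 / (d4 * d2 * (N : ℝ) ^ 2)) * Sig2 ^ 2
    Sig2 = (N : ℝ) ^ 2 * a ∧ Sig4 = (N : ℝ) ^ 2 * a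
    ∧ E4 = (1 / d4) * ((d2 / N) * a - ((4 * (N : ℝ) ^ 3 - 6 * (N : ℝ) ^ 2) / d2) * a ^ 2)
    ∧ (((N : ℝ) - 1) ^ 2 / ((N : ℝ) * (4 * (N : ℝ) - 6)) < a → E4 < 0) := by
  intro S Sig2 Sig4 d2 d4 a E4
  have hx : (5 : ℝ) ≤ (N : ℝ) := by exact_mod_cast hN
  have hSp : ∀ p, S (p + 1) = (N : ℝ) * b := by
    intro p
    have : S (p + 1) = ∑ j : Fin N, w j := by
      refine Finset.sum_congr rfl fun j _ => ?_
      rcases hw j with h | h <;> simp [h]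
    rw [this, hb]
  have h1 : S 1 = (N : ℝ) * b := hSp 0
  have h2 : S 2 = (N : ℝ) * b := hSp 1
  have h3 : S 3 = (N : ℝ) * b := hSp 2
  have h4 : S 4 = (N : ℝ) * b := hSp 3
  have hS2 : Sig2 = (N : ℝ) ^ 2 * a := by
    show (N : ℝ) * S 2 - S 1 ^ 2 = _
    rw [h1, h2]; ring
  have hS4 : Sig4 = (N : ℝ) ^ 2 * a := by
    show (N : ℝ) * S 4 - 4 * S 3 * S 1 + 3 * S 2 ^ 2 = _
    rw [h1, h2, h3, h4]; ring
  have hN0 : (N : ℝ) ≠ 0 := by nlinarith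
  have hN1 : (N : ℝ) - 1 ≠ 0 := by nlinarith
  have hN2 : (N : ℝ) - 2 ≠ 0 := by nlinarith
  have hN3 : (N : ℝ) - 3 ≠ 0 := by nlinarith
  have hE : E4 = (1 / d4) * ((d2 / N) * a
      - ((4 * (N : ℝ) ^ 3 - 6 * (N : ℝ) ^ 2) / d2) * a ^ 2) := by
    show (1 / (d4 * (N : ℝ) ^ 3)) * (d2 * Sig4 - 4 * Sig2 ^ 2)
        + (2 / (d4 * d2 * (N : ℝ) ^ 2)) * Sig2 ^ 2 = _
    rw [hS2, hS4]
    show (1 / ((N : ℝ) * ((N : ℝ) - 1) * ((N : ℝ) - 2) * ((N : ℝ) - 3) * (N : ℝ) ^ 3)) *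
        ((N : ℝ) * ((N : ℝ) - 1) * ((N : ℝ) ^ 2 * a) - 4 * ((N : ℝ) ^ 2 * a) ^ 2)
        + (2 / ((N : ℝ) * ((N : ℝ) - 1) * ((N : ℝ) - 2) * ((N : ℝ) - 3) *
          ((N : ℝ) * ((N : ℝ) - 1)) * (N : ℝ) ^ 2)) * ((N : ℝ) ^ 2 * a) ^ 2
        = (1 / ((N : ℝ) * ((N : ℝ) - 1) * ((N : ℝ) - 2) * ((N : ℝ) - 3))) *
          (((N : ℝ) * ((N : ℝ) - 1) / (N : ℝ)) * a
          - ((4 * (N : ℝ) ^ 3 - 6 * (N : ℝ) ^ 2) / ((N : ℝ) * ((N : ℝ) - 1))) * a ^ 2)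
    field_simp
    ring
  have hd2v : d2 = (N : ℝ) * ((N : ℝ) - 1) := rfl
  have hd4v : d4 = (N : ℝ) * ((N : ℝ) - 1) * ((N : ℝ) - 2) * ((N : ℝ) - 3) := rfl
  refine ⟨hS2, hS4, hE, fun ha => ?_⟩
  clear_value S Sig2 Sig4 d2 d4 a E4
  rw [hE, hd2v, hd4v]
  have hNpos : (0 : ℝ) < (N : ℝ) := by linarith
  have hd4pos : (0:ℝ) < (N : ℝ) * ((N : ℝ) - 1) * ((N : ℝ) - 2) * ((N : ℝ) - 3) :=
    mul_pos (mul_pos (mul_pos hNpos (by linarith)) (by linarith)) (by linarith)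
  have hd2pos : 0 < (N : ℝ) * ((N : ℝ) - 1) := mul_pos hNpos (by linarith)
  have hapos : 0 < a := by
    have h : 0 < ((N : ℝ) - 1) ^ 2 / ((N : ℝ) * (4 * (N : ℝ) - 6)) := by
      apply div_pos <;> nlinarith
    exact h.trans ha
  have hden : 0 < (N : ℝ) * (4 * (N : ℝ) - 6) := by nlinarith
  have ha' : ((N : ℝ) - 1) ^ 2 < a * ((N : ℝ) * (4 * (N : ℝ) - 6)) :=
    (div_lt_iff₀ hden).mp ha
  have hinner : ((N : ℝ) * ((N : ℝ) - 1) / N) * a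
      - ((4 * (N : ℝ) ^ 3 - 6 * (N : ℝ) ^ 2) / ((N : ℝ) * ((N : ℝ) - 1))) * a ^ 2 < 0 := by
    rw [div_mul_eq_mul_div, div_mul_eq_mul_div, sub_neg, div_lt_div_iff₀ hNpos hd2pos]
    have key := mul_lt_mul_of_pos_left ha' (by positivity : (0:ℝ) < (N:ℝ) ^ 2 * a)
    linarith only [key]
  have := mul_pos (one_div_pos.mpr hd4pos) (neg_pos.mpr hinner)
  linarith [this]
end

section
/- For binary weights (w_j ∈ {0,1}) there exist N and a value b ∈ [0,1] such that the unbiased second-order estimator E_4 is strictly negative; equivalently, for all N ≥ 5 the threshold (N−1)²/(N(4N−6)) = 1/4 − (N−2)/(2N(4N−6)) is strictly less than 1/4, the maximum of a = b − b², so a choice of b making E_4 < 0 exists whenever N²a can be realized. -/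
/-- For all `N ≥ 5` the threshold `(N−1)²/(N(4N−6))` equals
`1/4 − (N−2)/(2N(4N−6))` and is strictly less than `1/4`, the maximum of `a = b − b²`
on `[0,1]`; hence there exists `b ∈ [0,1]` for which the (binary-weight) estimator
`E₄(a) = (1/N^{\underline 4})((N^{\underline 2}/N)a − ((4N³−6N²)/N^{\underline 2})a²)`
is strictly negative. -/
theorem e4_negativity_exists (N : ℕ) (hN : 5 ≤ N) :
    let d2 : ℝ := (N : ℝ) * ((N : ℝ) - 1)
    let d4 : ℝ := (N : ℝ) * ((N : ℝ) - 1) * ((N : ℝ) - 2) * ((N : ℝ) - 3)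
    let E4 : ℝ → ℝ := fun a =>
      (1 / d4) * ((d2 / N) * a - ((4 * (N : ℝ) ^ 3 - 6 * (N : ℝ) ^ 2) / d2) * a ^ 2)
    (((N : ℝ) - 1) ^ 2 / ((N : ℝ) * (4 * (N : ℝ) - 6))
        = 1 / 4 - ((N : ℝ) - 2) / (2 * (N : ℝ) * (4 * (N : ℝ) - 6)))
    ∧ ((N : ℝ) - 1) ^ 2 / ((N : ℝ) * (4 * (N : ℝ) - 6)) < 1 / 4
    ∧ ∃ b ∈ Set.Icc (0 : ℝ) 1, E4 (b - b ^ 2) < 0 := by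
  intro d2 d4 E4
  have hN5 : (5 : ℝ) ≤ (N : ℝ) := by exact_mod_cast hN
  have h1 : (N : ℝ) ≠ 0 := by nlinarith
  have h46 : 4 * (N : ℝ) - 6 ≠ 0 := by nlinarith
  have hNm1 : (N : ℝ) - 1 > 0 := by nlinarith
  have hNm2 : (N : ℝ) - 2 > 0 := by nlinarith
  have hNm3 : (N : ℝ) - 3 > 0 := by nlinarith
  have hNpos : (0 : ℝ) < N := by nlinarith
  refine ⟨by rw [eq_sub_iff_add_eq, div_add_div _ _ (mul_ne_zero h1 h46) (mul_ne_zero (mul_ne_zero two_ne_zero h1) h46), div_eq_iff (mul_ne_zero (mul_ne_zero h1 h46) (mul_ne_zero (mul_ne_zero two_ne_zero h1) h46))]; ring, ?_, ?_⟩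
  · rw [div_lt_iff₀ (by nlinarith)]
    nlinarith
  · refine ⟨1/2, ⟨by norm_num, by norm_num⟩, ?_⟩
    show (1 / d4) * ((d2 / N) * _ - ((4 * (N : ℝ) ^ 3 - 6 * (N : ℝ) ^ 2) / d2) * _ ^ 2) < 0
    have hd4 : 0 < d4 := by positivity
    have hd2 : 0 < d2 := by positivity
    apply mul_neg_of_pos_of_neg (by positivity)
    rw [sub_neg, div_mul_eq_mul_div, div_mul_eq_mul_div, div_lt_div_iff₀ hNpos hd2]
    show d2 * ((1:ℝ)/2 - (1/2)^2) * d2 < (4 * (N : ℝ) ^ 3 - 6 * (N : ℝ) ^ 2) * ((1:ℝ)/2 - (1/2)^2) ^ 2 * N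
    simp only [d2]
    nlinarith [sq_nonneg ((N:ℝ)-1)]
end

section
/- For any real numbers w_1,...,w_N with u_j = w_j − S_1/N, the identity N²Σ_4 − 4Σ_2² = (N²/2)Σ_{j,k}(u_j² − u_k²)² holds; consequently the modified estimator Ê_4 = (N²Σ_4 − 4Σ_2²)/(N^{\underline{4}} N³) is always nonnegative. -/
/-- With `u_j = w_j − S₁/N`, the identity
`N²Σ₄ − 4Σ₂² = (N²/2)Σ_{j,k}(u_j² − u_k²)²` holds, hence the modified estimator
`Ê₄ = (N²Σ₄ − 4Σ₂²)/(N^{\underline 4} N³)` is always nonnegative. -/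
theorem e4hat_identity_nonneg (N : ℕ) (hN : 4 ≤ N) (w : Fin N → ℝ) :
    let S : ℕ → ℝ := fun p => ∑ j : Fin N, w j ^ p
    let Sig2 : ℝ := (N : ℝ) * S 2 - S 1 ^ 2
    let Sig4 : ℝ := (N : ℝ) * S 4 - 4 * S 3 * S 1 + 3 * S 2 ^ 2
    let u : Fin N → ℝ := fun j => w j - S 1 / N
    let d4 : ℝ := (N : ℝ) * ((N : ℝ) - 1) * ((N : ℝ) - 2) * ((N : ℝ) - 3)
    ((N : ℝ) ^ 2 * Sig4 - 4 * Sig2 ^ 2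
        = ((N : ℝ) ^ 2 / 2) * ∑ j : Fin N, ∑ k : Fin N, (u j ^ 2 - u k ^ 2) ^ 2)
    ∧ 0 ≤ ((N : ℝ) ^ 2 * Sig4 - 4 * Sig2 ^ 2) / (d4 * (N : ℝ) ^ 3) := by
  intro S Sig2 Sig4 u d4
  have hNR : (4 : ℝ) ≤ (N : ℝ) := by exact_mod_cast hN
  have hN0 : (0 : ℝ) < (N : ℝ) := by linarith
  have hNne : (N : ℝ) ≠ 0 := ne_of_gt hN0
  set m : ℝ := S 1 / N with hm
  have hcard : (Finset.univ : Finset (Fin N)).card = N := by simp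
  have hA : ∑ j : Fin N, u j ^ 2 = S 2 - 2 * m * S 1 + N * m ^ 2 := by
    have h : ∀ j : Fin N, u j ^ 2 = w j ^ 2 - 2 * m * w j + m ^ 2 := by
      intro j; simp only [u, hm]; ring
    rw [Finset.sum_congr rfl fun j _ => h j]
    simp only [Finset.sum_add_distrib, Finset.sum_sub_distrib, ← Finset.mul_sum,
      Finset.sum_const, hcard, nsmul_eq_mul, S, pow_one]
  have hB : ∑ j : Fin N, u j ^ 4
      = S 4 - 4 * m * S 3 + 6 * m ^ 2 * S 2 - 4 * m ^ 3 * S 1 + N * m ^ 4 := by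
    have h : ∀ j : Fin N, u j ^ 4
        = w j ^ 4 - 4 * m * w j ^ 3 + 6 * m ^ 2 * w j ^ 2 - 4 * m ^ 3 * w j ^ 1
          + m ^ 4 := by
      intro j; simp only [u, hm]; ring
    rw [Finset.sum_congr rfl fun j _ => h j]
    simp only [Finset.sum_add_distrib, Finset.sum_sub_distrib, ← Finset.mul_sum,
      Finset.sum_const, hcard, nsmul_eq_mul, S, pow_one]
  have key : ∑ j : Fin N, ∑ k : Fin N, (u j ^ 2 - u k ^ 2) ^ 2
      = 2 * (N : ℝ) * (∑ j : Fin N, u j ^ 4) - 2 * (∑ j : Fin N, u j ^ 2) ^ 2 := by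
    have h : ∀ j k : Fin N, (u j ^ 2 - u k ^ 2) ^ 2
        = u j ^ 4 - 2 * (u j ^ 2 * u k ^ 2) + u k ^ 4 := by intro j k; ring
    calc ∑ j : Fin N, ∑ k : Fin N, (u j ^ 2 - u k ^ 2) ^ 2
        = ∑ j : Fin N, ((N : ℝ) * u j ^ 4
            - 2 * (u j ^ 2 * ∑ k : Fin N, u k ^ 2) + ∑ k : Fin N, u k ^ 4) := by
          refine Finset.sum_congr rfl fun j _ => ?_
          rw [Finset.sum_congr rfl fun k _ => h j k]
          rw [Finset.sum_add_distrib, Finset.sum_sub_distrib,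
            Finset.sum_const, hcard, nsmul_eq_mul, ← Finset.mul_sum, ← Finset.mul_sum]
      _ = _ := by
          have hsq : ∑ x : Fin N, u x ^ 2 * (∑ k : Fin N, u k ^ 2)
              = (∑ x : Fin N, u x ^ 2) ^ 2 := by rw [← Finset.sum_mul, sq]
          simp only [Finset.sum_add_distrib, Finset.sum_sub_distrib, ← Finset.mul_sum,
            Finset.sum_const, hcard, nsmul_eq_mul, hsq]
          ring
  have hSum : ∀ j : Fin N, ∑ k : Fin N, (u j ^ 2 - u k ^ 2) ^ 2 ≥ 0 := fun j =>
    Finset.sum_nonneg fun k _ => sq_nonneg _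
  have hmain : (N : ℝ) ^ 2 * Sig4 - 4 * Sig2 ^ 2
      = ((N : ℝ) ^ 2 / 2) * ∑ j : Fin N, ∑ k : Fin N, (u j ^ 2 - u k ^ 2) ^ 2 := by
    rw [key, hA, hB]
    simp only [Sig2, Sig4, hm]
    field_simp
    ring
  refine ⟨hmain, ?_⟩
  rw [hmain]
  have hd4 : 0 < d4 * (N : ℝ) ^ 3 := by
    have hd : 0 < d4 :=
      mul_pos (mul_pos (mul_pos hN0 (by linarith)) (by linarith)) (by linarith)
    positivity
  apply div_nonneg _ (le_of_lt hd4)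
  exact mul_nonneg (by positivity)
    (Finset.sum_nonneg fun j _ => Finset.sum_nonneg fun k _ => sq_nonneg _)
end

section
/- The centered third moment satisfies the update rule Q(N) = ((N−1)/N)(q + ((N−2)/N²)u³ − (3p/N)u), where Q(N) = S_3(N)/N − 3S_2(N)S_1(N)/N² + 2S_1(N)³/N³, q = Q(N−1), p = P(N−1), u = w_N − S_1(N−1)/(N−1). -/
/-- Update rule for the centered third moment:
`Q(N) = ((N−1)/N)(q + ((N−2)/N²)u³ − (3p/N)u)`. -/
theorem third_moment_update (w : ℕ → ℝ) (N : ℕ) (hN : 2 ≤ N) :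
    let S : ℕ → ℕ → ℝ := fun k n => ∑ j ∈ Finset.Icc 1 n, w j ^ k
    let P : ℕ → ℝ := fun n => S 2 n / n - S 1 n ^ 2 / (n : ℝ) ^ 2
    let Q : ℕ → ℝ := fun n =>
      S 3 n / n - 3 * S 2 n * S 1 n / (n : ℝ) ^ 2 + 2 * S 1 n ^ 3 / (n : ℝ) ^ 3
    let m : ℝ := S 1 (N - 1) / ((N : ℝ) - 1)
    let p : ℝ := P (N - 1)
    let q : ℝ := Q (N - 1)
    let u : ℝ := w N - m
    Q N = (((N : ℝ) - 1) / N)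
      * (q + (((N : ℝ) - 2) / (N : ℝ) ^ 2) * u ^ 3 - (3 * p / N) * u) := by
  intro S P Q m p q u
  obtain ⟨n, rfl⟩ : ∃ n, N = n + 1 := ⟨N - 1, (Nat.succ_pred_eq_of_pos (by omega)).symm⟩
  have hn : 1 ≤ n := by omega
  have hstep : ∀ k, S k (n + 1) = S k n + w (n + 1) ^ k := by
    intro k
    simp only [S]
    rw [show Finset.Icc 1 (n + 1) = insert (n + 1) (Finset.Icc 1 n) by
      ext x; simp [Finset.mem_Icc]; omega]
    rw [Finset.sum_insert (by simp)]
    ring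
  have hNn : (n + 1 : ℕ) - 1 = n := by omega
  have hn0 : (n : ℝ) ≠ 0 := by positivity
  have hN0 : ((n : ℝ) + 1) ≠ 0 := by positivity
  simp only [Q, P, q, p, u, m, hNn, hstep, Nat.cast_add, Nat.cast_one,
    add_sub_cancel_right]
  field_simp
  ring
end

section
/- The quantity R satisfies the update rule R(N) = ((N−1)/N)(R(N−1) + (1/N)(p − ((N−2)/N)u²)² − 4((q/N)u − (p/N²)u²)), where R(N) = S_4(N)/N − 4S_3(N)S_1(N)/N² + 3S_2(N)²/N² − 4P(N)², with p = P(N−1), q = Q(N−1), u = w_N − S_1(N−1)/(N−1). -/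
/-- Update rule for `R`:
`R(N) = ((N−1)/N)(R(N−1) + (1/N)(p − ((N−2)/N)u²)² − 4((q/N)u − (p/N²)u²))`. -/
theorem fourth_moment_update (w : ℕ → ℝ) (N : ℕ) (hN : 2 ≤ N) :
    let S : ℕ → ℕ → ℝ := fun k n => ∑ j ∈ Finset.Icc 1 n, w j ^ k
    let P : ℕ → ℝ := fun n => S 2 n / n - S 1 n ^ 2 / (n : ℝ) ^ 2
    let Q : ℕ → ℝ := fun n =>
      S 3 n / n - 3 * S 2 n * S 1 n / (n : ℝ) ^ 2 + 2 * S 1 n ^ 3 / (n : ℝ) ^ 3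
    let R : ℕ → ℝ := fun n =>
      S 4 n / n - 4 * S 3 n * S 1 n / (n : ℝ) ^ 2 + 3 * S 2 n ^ 2 / (n : ℝ) ^ 2
        - 4 * P n ^ 2
    let m : ℝ := S 1 (N - 1) / ((N : ℝ) - 1)
    let p : ℝ := P (N - 1)
    let q : ℝ := Q (N - 1)
    let u : ℝ := w N - m
    R N = (((N : ℝ) - 1) / N)
      * (R (N - 1) + (1 / N) * (p - (((N : ℝ) - 2) / N) * u ^ 2) ^ 2
          - 4 * ((q / N) * u - (p / (N : ℝ) ^ 2) * u ^ 2)) := by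
  intro S P Q R m p q u
  obtain ⟨M, rfl⟩ : ∃ M, N = M + 1 := ⟨N - 1, by omega⟩
  have hM : 1 ≤ M := by omega
  have hMR : (1:ℝ) ≤ (M:ℝ) := by exact_mod_cast hM
  have hM0 : (M:ℝ) ≠ 0 := by positivity
  have hN0 : (M:ℝ) + 1 ≠ 0 := by positivity
  have hsucc : ∀ k, S k (M + 1) = S k M + w (M + 1) ^ k := fun k => by
    simpa using Finset.sum_Icc_succ_top (by omega : 1 ≤ M + 1) (fun j => w j ^ k)
  have hsub : M + 1 - 1 = M := by omega
  simp only [R, P, Q, S, m, p, q, u, hsub] at *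
  rw [hsucc 1, hsucc 2, hsucc 3, hsucc 4]
  push_cast
  simp only [add_sub_cancel_right]
  field_simp
  ring
end
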